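/- Let p > 1 and σ_p = (2^p − 1)^{1/p}. The lattice Λ_p^{(0)} ⊆ ℝ² spanned over ℤ by the vectors (1, 0) and (1/2, σ_p/2) is admissible for D_p (it contains no nonzero point with |x|^p + |y|^p < 1), and its covolume equals σ_p/2. -/

import Mathlib

open scoped Pointwise

/-- The open Minkowski ball `D_p = {(x,y) : |x|^p + |y|^p < 1}` in `ℝ²`. -/
def ballD (p : ℝ) : Set (ℝ × ℝ) :=
  {v : ℝ × ℝ | |v.1| ^ p + |v.2| ^ p < 1}

/-- The Minkowski curve `C_p = {(x,y) : |x|^p + |y|^p = 1}`, the boundary of `D_p`. -/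
def curveC (p : ℝ) : Set (ℝ × ℝ) :=
  {v : ℝ × ℝ | |v.1| ^ p + |v.2| ^ p = 1}

/-- The lattice (ℤ-span) generated by two vectors `a b : ℝ²`. -/
def latticeSet (a b : ℝ × ℝ) : Set (ℝ × ℝ) :=
  {v : ℝ × ℝ | ∃ m n : ℤ, v = (m : ℝ) • a + (n : ℝ) • b}

/-- The determinant of the 2×2 matrix with rows `a` and `b`. -/
def det2 (a b : ℝ × ℝ) : ℝ := a.1 * b.2 - a.2 * b.1

/-- A lattice with basis `a, b` is admissible for `D` if it meets `D` at most in `0`. -/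
def IsAdmissible (D : Set (ℝ × ℝ)) (a b : ℝ × ℝ) : Prop :=
  latticeSet a b ∩ D ⊆ {0}

/-- The critical determinant `Δ(D)`: the infimum of covolumes `|det(a,b)|` over all
full-rank lattices `ℤa + ℤb` admissible for `D` (with value `∞` if none exists). -/
noncomputable def criticalDet (D : Set (ℝ × ℝ)) : ENNReal :=
  sInf {d : ENNReal | ∃ a b : ℝ × ℝ, LinearIndependent ℝ ![a, b] ∧
    IsAdmissible D a b ∧ d = ENNReal.ofReal |det2 a b|}

/-- for `p > 1` and `σ_p = (2^p-1)^(1/p)`, the lattice spanned over ℤ by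
`(1,0)` and `(1/2, σ_p/2)` is admissible for `D_p` and has covolume `σ_p/2`. -/
theorem stmt_6 (p : ℝ) (hp : 1 < p) (σ : ℝ) (hσ : σ = ((2 : ℝ) ^ p - 1) ^ (1 / p)) :
    IsAdmissible (ballD p) (1, 0) (1 / 2, σ / 2) ∧
      |det2 (1, 0) (1 / 2, σ / 2)| = σ / 2 := by
  have hp0 : (0:ℝ) < p := lt_trans one_pos hp
  have h2p : (1:ℝ) < 2 ^ p :=
    (Real.one_lt_rpow_iff_of_pos (by norm_num)).mpr (Or.inl ⟨by norm_num, hp0⟩)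
  have h2p1 : (2:ℝ) ≤ 2 ^ p := by
    have := (Real.rpow_le_rpow_left_iff (x := 2) (y := 1) (z := p) (by norm_num)).mpr hp.le
    simpa using this
  have hbase : (0:ℝ) < 2 ^ p - 1 := by linarith
  have hσ0 : 0 < σ := by rw [hσ]; exact Real.rpow_pos_of_pos hbase _
  have hσp : σ ^ p = 2 ^ p - 1 := by
    rw [hσ, one_div, Real.rpow_inv_rpow hbase.le (ne_of_gt hp0)]
  have h2ppos : (0:ℝ) < 2 ^ p := by linarith
  constructor
  · rintro v ⟨⟨m, n, rfl⟩, hD⟩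
    simp only [ballD, Set.mem_setOf_eq, Prod.smul_mk, smul_eq_mul, Prod.mk_add_mk,
      mul_one, mul_zero, add_zero, zero_add] at hD
    have hn : n = 0 := by
      by_contra hn
      by_cases hc : 2 * m + n = 0
      · have h2 : (2:ℝ) ≤ |(n:ℝ)| := by
          have h : (2:ℤ) ≤ |n| := by rcases abs_cases n with ⟨h1,h2⟩|⟨h1,h2⟩ <;> omega
          calc (2:ℝ) = ((2:ℤ):ℝ) := by norm_num
          _ ≤ ((|n|:ℤ):ℝ) := by exact_mod_cast h
          _ = |(n:ℝ)| := by push_cast [Int.cast_abs]; ring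
        have hy : σ ≤ |(n:ℝ) * (σ / 2)| := by
          rw [abs_mul, abs_of_nonneg (by positivity : (0:ℝ) ≤ σ / 2)]
          nlinarith
        have hyp : (1:ℝ) ≤ |(n:ℝ) * (σ / 2)| ^ p := by
          have := Real.rpow_le_rpow hσ0.le hy hp0.le
          rw [hσp] at this; linarith
        have hx0 : (0:ℝ) ≤ |(m:ℝ) + (n:ℝ) * (1 / 2)| ^ p :=
          Real.rpow_nonneg (abs_nonneg _) _
        linarith
      · have h1 : (1:ℝ) ≤ |(2:ℝ) * m + n| := by
          have h : (1:ℤ) ≤ |2 * m + n| := by rcases abs_cases (2*m+n) with ⟨h1,h2⟩|⟨h1,h2⟩ <;> omega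
          calc (1:ℝ) = ((1:ℤ):ℝ) := by norm_num
          _ ≤ ((|2 * m + n|:ℤ):ℝ) := by exact_mod_cast h
          _ = |(2:ℝ) * m + n| := by push_cast [Int.cast_abs]; ring
        have hx : (1:ℝ)/2 ≤ |(m:ℝ) + (n:ℝ) * (1 / 2)| := by
          have he : (m:ℝ) + (n:ℝ) * (1 / 2) = ((2:ℝ) * m + n) / 2 := by ring
          rw [he, abs_div, abs_of_nonneg (by norm_num : (0:ℝ) ≤ 2)]
          linarith
        have hxp : (1:ℝ) / 2 ^ p ≤ |(m:ℝ) + (n:ℝ) * (1 / 2)| ^ p := by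
          have := Real.rpow_le_rpow (by norm_num : (0:ℝ) ≤ 1/2) hx hp0.le
          rwa [Real.div_rpow (by norm_num) (by norm_num), Real.one_rpow] at this
        have h1n : (1:ℝ) ≤ |(n:ℝ)| := by
          have h : (1:ℤ) ≤ |n| := by rcases abs_cases n with ⟨h1,h2⟩|⟨h1,h2⟩ <;> omega
          calc (1:ℝ) = ((1:ℤ):ℝ) := by norm_num
          _ ≤ ((|n|:ℤ):ℝ) := by exact_mod_cast h
          _ = |(n:ℝ)| := by push_cast [Int.cast_abs]; ring
        have hy : σ / 2 ≤ |(n:ℝ) * (σ / 2)| := by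
          rw [abs_mul, abs_of_nonneg (by positivity : (0:ℝ) ≤ σ / 2)]
          nlinarith
        have hyp : (2 ^ p - 1) / 2 ^ p ≤ |(n:ℝ) * (σ / 2)| ^ p := by
          have := Real.rpow_le_rpow (by positivity) hy hp0.le
          rwa [Real.div_rpow hσ0.le (by norm_num), hσp] at this
        have : (1:ℝ) ≤ |(m:ℝ) + (n:ℝ) * (1 / 2)| ^ p + |(n:ℝ) * (σ / 2)| ^ p := by
          have hsum : (1:ℝ) / 2 ^ p + (2 ^ p - 1) / 2 ^ p = 1 := by
            field_simp; ring
          linarith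
        linarith
    subst hn
    simp only [Int.cast_zero, zero_mul, mul_zero, add_zero, abs_zero] at hD ⊢
    rw [Real.zero_rpow (ne_of_gt hp0)] at hD
    have hm : m = 0 := by
      by_contra hm
      have h1 : (1:ℝ) ≤ |(m:ℝ)| := by
        have h : (1:ℤ) ≤ |m| := by rcases abs_cases m with ⟨h1,h2⟩|⟨h1,h2⟩ <;> omega
        calc (1:ℝ) = ((1:ℤ):ℝ) := by norm_num
        _ ≤ ((|m|:ℤ):ℝ) := by exact_mod_cast h
        _ = |(m:ℝ)| := by push_cast [Int.cast_abs]; ring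
      have := Real.rpow_le_rpow (by norm_num : (0:ℝ) ≤ 1) h1 hp0.le
      rw [Real.one_rpow] at this
      linarith
    subst hm
    simp
  · simp only [det2]
    rw [show (1:ℝ) * (σ / 2) - 0 * (1 / 2) = σ / 2 from by ring, abs_of_nonneg (by positivity)]
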